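/- Let n be a positive integer, μ ∈ ℂ^n a generic vector, and Δ a local derivation on the Witt algebra W_n = Der(ℂ[t_1^{±1},…,t_n^{±1}]) such that Δ(d_μ) = 0. Then for every α ∈ ℤ^n \ {0}, the element Δ(t^α d_μ) lies in the ℂ-linear span of the set {t^{kα} d_i : k ∈ ℤ, 1 ≤ i ≤ n}, i.e., Δ(t^α d_μ) is supported on the subgroup ℤα of ℤ^n. -/

import Mathlib

open scoped BigOperators

noncomputable section

/-- The Laurent polynomial algebra `ℂ[t₁^{±1},…,tₙ^{±1}]`, realized as the group
algebra of `ℤⁿ` over `ℂ`. -/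
abbrev LaurentAlg (n : ℕ) : Type := AddMonoidAlgebra ℂ (Fin n → ℤ)

/-- The Witt algebra `Wₙ = Der(ℂ[t₁^{±1},…,tₙ^{±1}])`. -/
abbrev WittAlg (n : ℕ) : Type := Derivation ℂ (LaurentAlg n) (LaurentAlg n)

/-- Pairing `(μ, β) ↦ ∑ μᵢ βᵢ`. -/
def dotp {n : ℕ} (μ : Fin n → ℂ) (β : Fin n → ℤ) : ℂ := ∑ i, μ i * (β i : ℂ)

lemma dotp_add {n : ℕ} (μ : Fin n → ℂ) (β γ : Fin n → ℤ) :
    dotp μ (β + γ) = dotp μ β + dotp μ γ := by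
  simp [dotp, mul_add, Finset.sum_add_distrib]

lemma dotp_zero {n : ℕ} (μ : Fin n → ℂ) : dotp μ 0 = 0 := by simp [dotp]

/-- A vector `μ ∈ ℂⁿ` is generic if `μ·α ≠ 0` for all nonzero `α ∈ ℤⁿ`. -/
def IsGeneric {n : ℕ} (μ : Fin n → ℂ) : Prop :=
  ∀ α : Fin n → ℤ, α ≠ 0 → dotp μ α ≠ 0

/-- Underlying linear map of `t^α d_μ`. -/
def wdAux {n : ℕ} (μ : Fin n → ℂ) (α : Fin n → ℤ) : LaurentAlg n →ₗ[ℂ] LaurentAlg n :=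
  (AddMonoidAlgebra.coeffLinearEquiv ℂ).symm.toLinearMap ∘ₗ
    Finsupp.lsum ℂ (fun β => dotp μ β • Finsupp.lsingle (α + β)) ∘ₗ
      (AddMonoidAlgebra.coeffLinearEquiv ℂ).toLinearMap

lemma wdAux_single {n : ℕ} (μ : Fin n → ℂ) (α β : Fin n → ℤ) (c : ℂ) :
    wdAux μ α (AddMonoidAlgebra.single β c) = dotp μ β • AddMonoidAlgebra.single (α + β) c := by
  classical
  rw [wdAux, AddMonoidAlgebra.single]
  show AddMonoidAlgebra.ofCoeff (Finsupp.lsum ℂ (fun β => dotp μ β • Finsupp.lsingle (α + β))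
    (Finsupp.single β c)) = _
  erw [Finsupp.lsum_single]
  rfl

/-- The derivation `t^α d_μ` of the Laurent polynomial algebra, sending
`t^β ↦ (μ·β) t^{α+β}`.  In particular `wd μ 0 = d_μ` and
`wd (Pi.single i 1) α = t^α dᵢ`. -/
def wd {n : ℕ} (μ : Fin n → ℂ) (α : Fin n → ℤ) : WittAlg n where
  toLinearMap := wdAux μ α
  map_one_eq_zero' := by
    rw [show (1 : LaurentAlg n) = AddMonoidAlgebra.single 0 1 from rfl, wdAux_single, dotp_zero,
      zero_smul]
  leibniz' := by
    intro a b
    show wdAux μ α (a * b) = a • wdAux μ α b + b • wdAux μ α a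
    induction a using AddMonoidAlgebra.induction_linear with
    | zero => simp
    | add f g hf hg =>
        rw [add_mul, map_add, hf, hg, map_add]
        simp only [smul_eq_mul, add_mul, mul_add]
        ring
    | single β c =>
      induction b using AddMonoidAlgebra.induction_linear with
      | zero => simp
      | add f g hf hg =>
          rw [mul_add, map_add, hf, hg, map_add]
          simp only [smul_eq_mul, add_mul, mul_add]
          ring
      | single γ d =>
          show wdAux μ α (AddMonoidAlgebra.single β c * AddMonoidAlgebra.single γ d) =
            AddMonoidAlgebra.single β c • wdAux μ α (AddMonoidAlgebra.single γ d)
            + AddMonoidAlgebra.single γ d • wdAux μ α (AddMonoidAlgebra.single β c)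
          rw [AddMonoidAlgebra.single_mul_single, wdAux_single, wdAux_single, wdAux_single,
            smul_eq_mul, smul_eq_mul, mul_smul_comm, mul_smul_comm,
            AddMonoidAlgebra.single_mul_single, AddMonoidAlgebra.single_mul_single,
            dotp_add, add_smul]
          rw [show β + (α + γ) = α + (β + γ) by abel, show γ + (α + β) = α + (β + γ) by abel,
            mul_comm d c, add_comm]

/-- A linear map `Δ` on a Lie algebra `L` is a local derivation if for each `x`
there is a Lie algebra derivation `Dₓ` with `Δ x = Dₓ x`. -/
def IsLocalDerivation {L : Type*} [LieRing L] [LieAlgebra ℂ L] (Δ : L →ₗ[ℂ] L) : Prop :=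
  ∀ x : L, ∃ D : LieDerivation ℂ L L, Δ x = D x

end

noncomputable section Aux
open Finsupp


variable {n : ℕ}

instance : CoeFun (LaurentAlg n) (fun _ => (Fin n → ℤ) → ℂ) := ⟨fun f => f.coeff⟩

lemma dotp_single (μ : Fin n → ℂ) (i : Fin n) : dotp μ (Pi.single i 1) = μ i := by
  simp [dotp, Pi.single_apply, Finset.sum_ite_eq', mul_comm]

lemma dotp_sub (μ : Fin n → ℂ) (β γ : Fin n → ℤ) :
    dotp μ (β - γ) = dotp μ β - dotp μ γ := by
  simp [dotp, sub_mul, mul_sub, Finset.sum_sub_distrib]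

lemma wd_apply (ν : Fin n → ℂ) (β : Fin n → ℤ) (f : LaurentAlg n) (γ : Fin n → ℤ) :
    (wd ν β f) γ = dotp ν (γ - β) * f (γ - β) := by
  induction f using AddMonoidAlgebra.induction_linear with
  | zero => simp
  | add f g hf hg =>
    have : wd ν β (f + g) = wd ν β f + wd ν β g := map_add _ _ _
    rw [this, AddMonoidAlgebra.coeff_add, Finsupp.add_apply, hf, hg, AddMonoidAlgebra.coeff_add,
      Finsupp.add_apply, mul_add]
  | single γ' c =>
    have h1 : wd ν β (AddMonoidAlgebra.single γ' c) = dotp ν γ' • AddMonoidAlgebra.single (β + γ') c :=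
      wdAux_single ν β γ' c
    rw [h1]
    rw [AddMonoidAlgebra.coeff_smul, Finsupp.smul_apply, AddMonoidAlgebra.coeff_single,
      AddMonoidAlgebra.coeff_single, Finsupp.single_apply, Finsupp.single_apply]
    by_cases h : γ' = γ - β
    · subst h
      simp [show β + (γ - β) = γ by abel]
    · have h2 : ¬ β + γ' = γ := by
        intro hc; exact h (by rw [← hc]; abel)
      simp [h2, h]

lemma wd_single_one (ν : Fin n → ℂ) (β γ : Fin n → ℤ) :
    wd ν β (AddMonoidAlgebra.single γ (1:ℂ)) = dotp ν γ • AddMonoidAlgebra.single (β + γ) 1 :=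
  wdAux_single ν β γ 1

/-- Degree/direction coefficients of a derivation of the Laurent algebra. -/
def wcoeffL : WittAlg n →ₗ[ℂ] ((Fin n → ℤ) → (Fin n → ℂ)) where
  toFun D := fun δ i => (D (AddMonoidAlgebra.single (Pi.single i 1) (1:ℂ))) (δ + Pi.single i 1)
  map_add' D D' := by funext δ i; simp
  map_smul' c D := by funext δ i; simp

abbrev wcoeff (D : WittAlg n) (δ : Fin n → ℤ) : Fin n → ℂ := wcoeffL D δ

lemma wcoeff_wd (ν : Fin n → ℂ) (β δ : Fin n → ℤ) :
    wcoeff (wd ν β) δ = if δ = β then ν else 0 := by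
  funext i
  show (wd ν β (AddMonoidAlgebra.single (Pi.single i 1) (1:ℂ))) (δ + Pi.single i 1) = _
  rw [wd_single_one, dotp_single, AddMonoidAlgebra.coeff_smul, Finsupp.smul_apply,
    AddMonoidAlgebra.coeff_single, Finsupp.single_apply]
  by_cases h : δ = β
  · subst h; simp
  · have : ¬ β + Pi.single i 1 = δ + Pi.single i 1 := by
      intro hc; exact h (by have := add_right_cancel hc; rw [this])
    simp [this, h]


lemma wcoeff_def (D : WittAlg n) (δ : Fin n → ℤ) (i : Fin n) :
    wcoeff D δ i = (D (AddMonoidAlgebra.single (Pi.single i 1) (1:ℂ))) (δ + Pi.single i 1) := rfl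

lemma deriv_leibniz_single (D : WittAlg n) (β γ : Fin n → ℤ) :
    D (AddMonoidAlgebra.single (β + γ) (1:ℂ)) =
      AddMonoidAlgebra.single β (1:ℂ) * D (AddMonoidAlgebra.single γ 1)
        + AddMonoidAlgebra.single γ (1:ℂ) * D (AddMonoidAlgebra.single β 1) := by
  have h : (AddMonoidAlgebra.single (β+γ) (1:ℂ) : LaurentAlg n)
      = AddMonoidAlgebra.single β 1 * AddMonoidAlgebra.single γ 1 := by
    rw [AddMonoidAlgebra.single_mul_single, one_mul]
  rw [h, Derivation.leibniz, smul_eq_mul, smul_eq_mul]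

def Hmap (D : WittAlg n) : (Fin n → ℤ) →+ LaurentAlg n :=
  AddMonoidHom.mk' (fun β => AddMonoidAlgebra.single (-β) (1:ℂ) * D (AddMonoidAlgebra.single β 1)) (by
    intro β γ
    rw [deriv_leibniz_single D β γ, mul_add, ← mul_assoc, ← mul_assoc,
      AddMonoidAlgebra.single_mul_single, AddMonoidAlgebra.single_mul_single, one_mul,
      show -(β+γ)+β = -γ by abel, show -(β+γ)+γ = -β by abel, add_comm])

lemma Hmap_eq_sum (D : WittAlg n) (β : Fin n → ℤ) :
    Hmap D β = ∑ j, (β j) • Hmap D (Pi.single j 1) := by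
  have hβ : β = ∑ j, (β j) • Pi.single j (1:ℤ) := by
    funext j
    rw [Finset.sum_apply]
    simp [Pi.single_apply, Finset.sum_ite_eq']
  calc Hmap D β = Hmap D (∑ j, (β j) • Pi.single j (1:ℤ)) := by rw [← hβ]
  _ = ∑ j, (β j) • Hmap D (Pi.single j 1) := by
      rw [map_sum]
      exact Finset.sum_congr rfl (fun j _ => map_zsmul _ _ _)

lemma deriv_single_coeff (D : WittAlg n) (β γ : Fin n → ℤ) :
    (D (AddMonoidAlgebra.single β (1:ℂ))) γ = ∑ j, (β j : ℂ) * wcoeff D (γ - β) j := by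
  have h1 : D (AddMonoidAlgebra.single β (1:ℂ)) = AddMonoidAlgebra.single β (1:ℂ) * Hmap D β := by
    show D _ = AddMonoidAlgebra.single β 1 * (AddMonoidAlgebra.single (-β) 1 * D (AddMonoidAlgebra.single β 1))
    rw [← mul_assoc, AddMonoidAlgebra.single_mul_single, one_mul, add_neg_cancel,
      show (AddMonoidAlgebra.single (0 : Fin n → ℤ) (1:ℂ) : LaurentAlg n) = 1 from rfl, one_mul]
  rw [h1, AddMonoidAlgebra.coeff_single_mul_apply, one_mul, Hmap_eq_sum, AddMonoidAlgebra.coeff_sum,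
    Finsupp.finset_sum_apply]
  refine Finset.sum_congr rfl (fun j _ => ?_)
  rw [AddMonoidAlgebra.coeff_smul, Finsupp.smul_apply,
    show Hmap D (Pi.single j 1)
      = AddMonoidAlgebra.single (-Pi.single j 1) (1:ℂ) * D (AddMonoidAlgebra.single (Pi.single j 1) 1) from rfl,
    AddMonoidAlgebra.coeff_single_mul_apply, one_mul, wcoeff_def,
    show - -Pi.single j 1 + (-β + γ) = γ - β + Pi.single j (1:ℤ) by abel, zsmul_eq_mul]

lemma wcoeff_eq_imp_eq {D D' : WittAlg n} (h : wcoeffL D = wcoeffL D') : D = D' := by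
  have hs : ∀ β : Fin n → ℤ, D (AddMonoidAlgebra.single β (1:ℂ)) = D' (AddMonoidAlgebra.single β 1) := by
    intro β
    ext γ
    rw [deriv_single_coeff, deriv_single_coeff]
    simp only [wcoeff, h]
  apply Derivation.ext
  intro f
  induction f using AddMonoidAlgebra.induction_linear with
  | zero => simp
  | add f g hf hg => rw [map_add, map_add, hf, hg]
  | single β c =>
    have hsingle : (AddMonoidAlgebra.single β c : LaurentAlg n) = c • AddMonoidAlgebra.single β 1 := by
      rw [AddMonoidAlgebra.smul_single, smul_eq_mul, mul_one]
    rw [hsingle, Derivation.map_smul, Derivation.map_smul, hs]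

lemma wcoeff_support_finite (D : WittAlg n) : {δ | wcoeff D δ ≠ 0}.Finite := by
  have h : {δ | wcoeff D δ ≠ 0} ⊆
      ⋃ i : Fin n, (fun γ => γ - Pi.single i 1) ''
        ((D (AddMonoidAlgebra.single (Pi.single i 1) 1)).coeff.support : Set (Fin n → ℤ)) := by
    intro δ hδ
    rcases Function.ne_iff.mp hδ with ⟨i, hi⟩
    refine Set.mem_iUnion.mpr ⟨i, ⟨δ + Pi.single i 1, ?_, add_sub_cancel_right δ _⟩⟩
    exact Finsupp.mem_support_iff.mpr hi
  exact Set.Finite.subset (Set.finite_iUnion fun i => (Finset.finite_toSet _).image _) h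

lemma sum_cast_single (w : Fin n → ℂ) (i : Fin n) :
    ∑ j, ((Pi.single i 1 : Fin n → ℤ) j : ℂ) * w j = w i := by
  simp [Pi.single_apply, ite_mul, Finset.sum_ite_eq']

lemma sum_cast_dotp (w : Fin n → ℂ) (β : Fin n → ℤ) :
    ∑ j, ((β j : ℤ) : ℂ) * w j = dotp w β := by
  rw [dotp]; exact Finset.sum_congr rfl fun j _ => mul_comm _ _

lemma wcoeff_lie_d0 (μ : Fin n → ℂ) (W : WittAlg n) (δ : Fin n → ℤ) (i : Fin n) :
    wcoeff ⁅wd μ 0, W⁆ δ i = dotp μ δ * wcoeff W δ i := by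
  rw [wcoeff_def, Derivation.commutator_apply]
  have h1 : wd μ 0 (AddMonoidAlgebra.single (Pi.single i 1) (1:ℂ))
      = μ i • AddMonoidAlgebra.single (Pi.single i (1:ℤ)) (1:ℂ) := by
    rw [wd_single_one, dotp_single, zero_add]
  rw [h1, Derivation.map_smul, AddMonoidAlgebra.coeff_sub, Finsupp.sub_apply,
    AddMonoidAlgebra.coeff_smul, Finsupp.smul_apply, wd_apply, sub_zero,
    wcoeff_def]
  have h2 : dotp μ (δ + Pi.single i 1) = dotp μ δ + μ i := by rw [dotp_add, dotp_single]
  rw [h2, smul_eq_mul]; ring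

lemma wcoeff_lie_wd (μ : Fin n → ℂ) (α : Fin n → ℤ) (P : WittAlg n) (δ : Fin n → ℤ)
    (i : Fin n) :
    wcoeff ⁅P, wd μ α⁆ δ i
      = dotp (wcoeff P (δ - α)) α * μ i - dotp μ (δ - α) * wcoeff P (δ - α) i := by
  rw [wcoeff_def, Derivation.commutator_apply, AddMonoidAlgebra.coeff_sub, Finsupp.sub_apply]
  have h1 : wd μ α (AddMonoidAlgebra.single (Pi.single i 1) (1:ℂ))
      = μ i • AddMonoidAlgebra.single (α + Pi.single i 1) (1:ℂ) := by
    rw [wd_single_one, dotp_single]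
  rw [h1, Derivation.map_smul, AddMonoidAlgebra.coeff_smul, Finsupp.smul_apply, deriv_single_coeff,
    wd_apply,
    show δ + Pi.single i 1 - (α + Pi.single i 1) = δ - α by abel,
    show δ + Pi.single i 1 - α = δ - α + Pi.single i 1 by abel, ← wcoeff_def,
    dotp_add, dotp_single]
  rw [sum_cast_dotp, dotp_add, dotp_single, smul_eq_mul]; ring

lemma lie_wd0_wd (μ : Fin n → ℂ) (α : Fin n → ℤ) :
    ⁅wd μ 0, wd μ α⁆ = dotp μ α • wd μ α := by
  apply wcoeff_eq_imp_eq
  funext δ i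
  have h1 : wcoeffL ⁅wd μ 0, wd μ α⁆ δ i = dotp μ δ * wcoeff (wd μ α) δ i :=
    wcoeff_lie_d0 μ (wd μ α) δ i
  have h2 : wcoeffL (dotp μ α • wd μ α) δ i = dotp μ α * wcoeff (wd μ α) δ i := by
    rw [map_smul]; rfl
  rw [h1, h2, wcoeff_wd]
  by_cases h : δ = α
  · subst h; simp
  · simp [h]

lemma key_eq (μ : Fin n → ℂ) (α : Fin n → ℤ) (D : LieDerivation ℂ (WittAlg n) (WittAlg n))
    (δ : Fin n → ℤ) (i : Fin n) :
    dotp μ α * wcoeff (D (wd μ α)) δ i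
      = dotp (wcoeff (D (wd μ 0)) (δ - α)) α * μ i
        - dotp μ (δ - α) * wcoeff (D (wd μ 0)) (δ - α) i
        + dotp μ δ * wcoeff (D (wd μ α)) δ i := by
  have h := LieDerivation.apply_lie_eq_add D (wd μ 0) (wd μ α)
  rw [lie_wd0_wd] at h
  have h2 : dotp μ α • D (wd μ α) = ⁅wd μ 0, D (wd μ α)⁆ + ⁅D (wd μ 0), wd μ α⁆ := by
    rw [← map_smul]; exact h
  calc dotp μ α * wcoeff (D (wd μ α)) δ i
      = wcoeffL (dotp μ α • D (wd μ α)) δ i := by rw [map_smul]; rfl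
    _ = wcoeffL (⁅wd μ 0, D (wd μ α)⁆ + ⁅D (wd μ 0), wd μ α⁆) δ i := by rw [h2]
    _ = wcoeff ⁅wd μ 0, D (wd μ α)⁆ δ i + wcoeff ⁅D (wd μ 0), wd μ α⁆ δ i := by
        rw [map_add]; rfl
    _ = _ := by rw [wcoeff_lie_wd, wcoeff_lie_d0]; ring

/-- The forced solution of the recursion, starting at index `K`. -/
def vseq (x : ℤ → (Fin n → ℂ)) (B : ℤ → ((Fin n → ℂ) →ₗ[ℂ] (Fin n → ℂ))) (K : ℤ) :
    ℕ → ℂ → (Fin n → ℂ)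
  | 0 => fun c => c • x K
  | (m+1) => fun c => c • x (K + (m+1)) - c • B (K + (m+1)) (vseq x B K m c)

lemma vseq_cont (x : ℤ → (Fin n → ℂ)) (B : ℤ → ((Fin n → ℂ) →ₗ[ℂ] (Fin n → ℂ))) (K : ℤ) :
    ∀ m, Continuous (fun c => vseq x B K m c) := by
  intro m
  induction m with
  | zero => exact continuous_id.smul continuous_const
  | succ m ih =>
    exact (continuous_id.smul continuous_const).sub
      (continuous_id.smul ((B _).continuous_of_finiteDimensional.comp ih))

lemma vseq_zero (x : ℤ → (Fin n → ℂ)) (B : ℤ → ((Fin n → ℂ) →ₗ[ℂ] (Fin n → ℂ))) (K : ℤ) :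
    ∀ m, vseq x B K m 0 = 0 := by
  intro m
  induction m with
  | zero => simp [vseq]
  | succ m ih => simp [vseq]

lemma seq_lemma (x : ℤ → (Fin n → ℂ)) (B : ℤ → ((Fin n → ℂ) →ₗ[ℂ] (Fin n → ℂ)))
    (hBinj : ∀ k, Function.Injective (B k))
    (hx : (Function.support x).Finite)
    (hmain : ∀ c : ℂ, ∃ p : ℤ → (Fin n → ℂ), (Function.support p).Finite ∧
      ∀ k : ℤ, p k = c • x k - c • B k (p (k - 1))) :
    ∀ k, x k = 0 := by
  classical
  obtain ⟨K, hK⟩ := hx.bddBelow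
  obtain ⟨M₀, hM₀⟩ := hx.bddAbove
  have hxlow : ∀ k, k < K → x k = 0 := by
    intro k hk
    by_contra hne
    exact absurd (hK (Function.mem_support.mpr hne)) (by omega)
  have hxhigh : ∀ k, M₀ < k → x k = 0 := by
    intro k hk
    by_contra hne
    exact absurd (hM₀ (Function.mem_support.mpr hne)) (by omega)
  -- every solution of the recursion agrees with the forced solution
  have hp_eq : ∀ (c : ℂ) (p : ℤ → (Fin n → ℂ)), (Function.support p).Finite →
      (∀ k : ℤ, p k = c • x k - c • B k (p (k - 1))) →
      (∀ k, k < K → p k = 0) ∧ ∀ m : ℕ, p (K + m) = vseq x B K m c := by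
    intro c p hfin hrec
    obtain ⟨L₀, hL₀⟩ := hfin.bddBelow
    set L : ℤ := min L₀ K with hL
    have hplow0 : ∀ k, k < L → p k = 0 := by
      intro k hk
      by_contra hne
      have := hL₀ (Function.mem_support.mpr hne)
      omega
    have hplow : ∀ k, k < K → p k = 0 := by
      have climb : ∀ k, L ≤ k → (k < K → p k = 0) := by
        refine Int.le_induction ?_ ?_
        · intro hLK
          rw [hrec L, hxlow L hLK, hplow0 (L - 1) (by omega)]
          simp
        · intro k _ ih hk1
          rw [hrec (k + 1), hxlow _ hk1, show k + 1 - 1 = k by ring, ih (by omega)]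
          simp
      intro k hk
      rcases lt_or_ge k L with h | h
      · exact hplow0 k h
      · exact climb k h hk
    refine ⟨hplow, ?_⟩
    intro m
    induction m with
    | zero =>
      have h0 : K + ((0 : ℕ) : ℤ) = K := by simp
      rw [h0, hrec K, hplow (K - 1) (by omega)]
      simp [vseq]
    | succ m ih =>
      have h1 : K + ((m + 1 : ℕ) : ℤ) = (K + (m : ℤ)) + 1 := by push_cast; ring
      rw [h1, hrec]
      have h2 : K + (m : ℤ) + 1 - 1 = K + (m : ℤ) := by ring
      rw [h2, ih]
      show _ = vseq x B K (m + 1) c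
      simp only [vseq]
      have h3 : K + ((m : ℤ) + 1) = K + (m : ℤ) + 1 := by ring
      rw [h3]
  -- key step : if everything above M vanishes and M ≥ K then x M = 0
  have hM : ∀ M : ℤ, K ≤ M → (∀ k, M < k → x k = 0) → x M = 0 := by
    intro M hKM hup
    have hpM : ∀ c : ℂ, c ≠ 0 → vseq x B K (M - K).toNat c = 0 := by
      intro c hc
      obtain ⟨p, hfin, hrec⟩ := hmain c
      obtain ⟨hplow, hmeq⟩ := hp_eq c p hfin hrec
      obtain ⟨U, hU⟩ := hfin.bddAbove
      set N : ℤ := max (M + 1) (U + 1) with hN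
      have hpN : p N = 0 := by
        by_contra hne
        have := hU (Function.mem_support.mpr hne)
        omega
      have hdown : ∀ j : ℕ, M ≤ N - j → p (N - j) = 0 := by
        intro j
        induction j with
        | zero => intro _; simpa using hpN
        | succ j ih =>
          intro hMj
          have hcast : ((j + 1 : ℕ) : ℤ) = (j : ℤ) + 1 := by push_cast; ring
          rw [hcast] at hMj ⊢
          have h2 : p (N - j) = 0 := ih (by omega)
          have h4 : x (N - j) = 0 := hup _ (by omega)
          have h5 := hrec (N - j)
          rw [h2, h4, smul_zero, zero_sub] at h5
          have h6 : B (N - j) (p (N - j - 1)) = 0 :=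
            (smul_eq_zero.mp (neg_eq_zero.mp h5.symm)).resolve_left hc
          have h7 : p (N - j - 1) = 0 := by
            apply hBinj (N - j)
            rw [h6, map_zero]
          have h8 : N - ((j : ℤ) + 1) = N - j - 1 := by ring
          rw [h8]
          exact h7
      have hMN : ((N - M).toNat : ℤ) = N - M := Int.toNat_of_nonneg (by omega)
      have hpM0 : p M = 0 := by
        have := hdown (N - M).toNat (by omega)
        rw [show N - ((N - M).toNat : ℤ) = M by omega] at this
        exact this
      have hKM0 : K + (((M - K).toNat : ℕ) : ℤ) = M := by omega
      rw [← hmeq (M - K).toNat, hKM0]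
      exact hpM0
    rcases Nat.eq_zero_or_pos (M - K).toNat with hm | hm
    · have hMK : M = K := by omega
      have := hpM 1 one_ne_zero
      rw [hm] at this
      simp [vseq] at this
      rw [hMK]
      exact this
    · obtain ⟨m, hm'⟩ : ∃ m : ℕ, (M - K).toNat = m + 1 := ⟨(M - K).toNat - 1, by omega⟩
      have hidx : K + ((m : ℤ) + 1) = M := by omega
      have hxM : ∀ c : ℂ, c ≠ 0 → x M = B M (vseq x B K m c) := by
        intro c hc
        have h0 := hpM c hc
        rw [hm'] at h0
        simp only [vseq] at h0
        rw [show ((m : ℕ) + 1 : ℤ) = ((m : ℤ) + 1) by ring] at h0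
        rw [hidx] at h0
        have := sub_eq_zero.mp h0
        have h1 : c • x M = c • B M (vseq x B K m c) := this
        exact smul_right_injective _ hc h1
      have hcont : Continuous fun c => B M (vseq x B K m c) :=
        (B M).continuous_of_finiteDimensional.comp (vseq_cont x B K m)
      have hlim0 : Filter.Tendsto (fun c => B M (vseq x B K m c)) (nhdsWithin 0 {(0:ℂ)}ᶜ)
          (nhds 0) := by
        have h := (hcont.tendsto 0).mono_left (nhdsWithin_le_nhds (s := {(0:ℂ)}ᶜ))
        rwa [vseq_zero, map_zero] at h
      have hlimc : Filter.Tendsto (fun c => B M (vseq x B K m c)) (nhdsWithin 0 {(0:ℂ)}ᶜ)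
          (nhds (x M)) := by
        apply Filter.Tendsto.congr' _ tendsto_const_nhds
        filter_upwards [self_mem_nhdsWithin] with c hc
        exact hxM c hc
      exact (tendsto_nhds_unique hlimc hlim0)
  -- conclude
  have hstep : ∀ j : ℕ, ∀ k, M₀ - j < k → x k = 0 := by
    intro j
    induction j with
    | zero => intro k hk; exact hxhigh k (by omega)
    | succ j ih =>
      intro k hk
      rcases lt_or_ge (M₀ - (j : ℤ)) k with h | h
      · exact ih k h
      · have hkeq : k = M₀ - j := by omega
        subst hkeq
        rcases lt_or_ge (M₀ - (j : ℤ)) K with h2 | h2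
        · exact hxlow _ h2
        · exact hM _ h2 (fun k' hk' => ih k' hk')
  intro k
  rcases le_or_gt k M₀ with h | h
  · have := hstep (M₀ - k + 1).toNat k (by omega)
    exact this
  · exact hxhigh k h

lemma wcoeff_add (W W' : WittAlg n) (δ : Fin n → ℤ) :
    wcoeff (W + W') δ = wcoeff W δ + wcoeff W' δ :=
  congrFun (map_add wcoeffL W W') δ

lemma wcoeff_smul (c : ℂ) (W : WittAlg n) (δ : Fin n → ℤ) :
    wcoeff (c • W) δ = c • wcoeff W δ :=
  congrFun (map_smul wcoeffL c W) δ

lemma dotp_smul_left (c : ℂ) (w : Fin n → ℂ) (β : Fin n → ℤ) :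
    dotp (c • w) β = c * dotp w β := by
  simp [dotp, Finset.mul_sum, mul_assoc]

lemma wd_decomp (ν : Fin n → ℂ) (β : Fin n → ℤ) :
    wd ν β = ∑ i, ν i • wd (Pi.single i 1) β := by
  apply wcoeff_eq_imp_eq
  funext δ j
  have hR : wcoeffL (∑ i, ν i • wd (Pi.single i 1) β) δ j
      = ∑ i, ν i * wcoeff (wd (Pi.single i 1) β) δ j := by
    rw [map_sum wcoeffL _ Finset.univ, Finset.sum_apply, Finset.sum_apply]
    exact Finset.sum_congr rfl fun i _ => congrFun (wcoeff_smul (ν i) _ δ) j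
  rw [hR]
  show wcoeff (wd ν β) δ j = _
  rw [wcoeff_wd]
  have hterm : ∀ i : Fin n, wcoeff (wd (Pi.single i (1:ℂ)) β) δ
      = if δ = β then (Pi.single i (1:ℂ) : Fin n → ℂ) else 0 := fun i => wcoeff_wd _ _ _
  rw [Finset.sum_congr rfl fun i _ => by rw [hterm i]]
  by_cases h : δ = β
  · simp [h, Pi.single_apply, mul_ite, Finset.sum_ite_eq']
  · simp [h]

/-- The linear functional `v ↦ dotp v α`. -/
def dotA (α : Fin n → ℤ) : (Fin n → ℂ) →ₗ[ℂ] ℂ where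
  toFun v := dotp v α
  map_add' u v := by simp [dotp, add_mul, Finset.sum_add_distrib]
  map_smul' c v := by simp [dotp, Finset.mul_sum, mul_assoc]

end Aux

/-- If `Δ` is a local derivation on `Wₙ` with `Δ(d_μ) = 0` (`μ` generic),
then for every `α ∈ ℤⁿ \ {0}`, `Δ(t^α d_μ)` lies in the span of `{t^{kα} dᵢ : k ∈ ℤ, i}`. -/
theorem local_derivation_supported_on_line (n : ℕ) (hn : 0 < n)
    (μ : Fin n → ℂ) (hμ : IsGeneric μ)
    (Δ : WittAlg n →ₗ[ℂ] WittAlg n) (hΔ : IsLocalDerivation Δ)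
    (h0 : Δ (wd μ 0) = 0) :
    ∀ α : Fin n → ℤ, α ≠ 0 →
      Δ (wd μ α) ∈ Submodule.span ℂ
        {x : WittAlg n | ∃ (k : ℤ) (i : Fin n), x = wd (Pi.single i 1) (k • α)} := by
  classical
  intro α hα
  set X : WittAlg n := Δ (wd μ α) with hXdef
  obtain ⟨j₀, hj₀⟩ := Function.ne_iff.mp hα
  have hj₀' : α j₀ ≠ 0 := by simpa using hj₀
  have hinj : Function.Injective (fun k : ℤ => k • α) := by
    intro k k' h
    have h2 := congrFun h j₀
    simp only [Pi.smul_apply, smul_eq_mul] at h2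
    exact mul_right_cancel₀ hj₀' h2
  have hline : ∀ δ₀ : Fin n → ℤ, (¬ ∃ k : ℤ, δ₀ = k • α) → wcoeff X δ₀ = 0 := by
    intro δ₀ hδ₀
    have hinj2 : Function.Injective (fun k : ℤ => δ₀ + k • α) := by
      intro k k' h
      exact hinj (add_left_cancel h)
    have hne : ∀ k : ℤ, δ₀ + k • α ≠ 0 := by
      intro k h
      refine hδ₀ ⟨-k, ?_⟩
      rw [neg_smul]
      exact eq_neg_of_add_eq_zero_left h
    have hdot : ∀ k : ℤ, dotp μ (δ₀ + k • α) ≠ 0 := fun k => hμ _ (hne k)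
    have hne2 : ∀ k : ℤ, δ₀ + k • α - α ≠ 0 := by
      intro k h
      refine hδ₀ ⟨1 - k, ?_⟩
      rw [sub_smul, one_smul]
      exact eq_sub_of_add_eq (sub_eq_zero.mp h)
    have hdot2 : ∀ k : ℤ, dotp μ (δ₀ + k • α) - dotp μ α ≠ 0 := by
      intro k h
      have h1 := hμ _ (hne2 k)
      rw [dotp_sub] at h1
      exact h1 h
    set Bmap : ℤ → ((Fin n → ℂ) →ₗ[ℂ] (Fin n → ℂ)) := fun k =>
      LinearMap.id - (dotp μ (δ₀ + (k-1) • α))⁻¹ • ((dotA α).smulRight μ) with hBmap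
    have hBapp : ∀ (k : ℤ) (v : Fin n → ℂ),
        Bmap k v = v - (dotp μ (δ₀ + (k-1) • α))⁻¹ • (dotp v α • μ) := fun k v => rfl
    have hBinj : ∀ k : ℤ, Function.Injective (Bmap k) := by
      intro k
      have hker : ∀ v, Bmap k v = 0 → v = 0 := by
        intro v hv
        rw [hBapp] at hv
        set lam := dotp μ (δ₀ + (k-1) • α) with hlam
        have hlne : lam ≠ 0 := hdot (k-1)
        have hv' : v = lam⁻¹ • (dotp v α • μ) := by rwa [sub_eq_zero] at hv
        have hda : dotp v α = lam⁻¹ * (dotp v α * dotp μ α) := by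
          conv_lhs => rw [hv']
          rw [dotp_smul_left, dotp_smul_left]
        have hva : dotp v α = 0 := by
          have e : dotp v α * (lam - dotp μ α) = 0 := by
            have := congrArg (· * lam) hda
            rw [mul_comm lam⁻¹, mul_assoc, inv_mul_cancel₀ hlne, mul_one] at this
            linear_combination this
          rcases mul_eq_zero.mp e with h | h
          · exact h
          · exact absurd h (hdot2 (k-1))
        rw [hv', hva, zero_smul, smul_zero]
      intro a b hab
      have h1 : Bmap k (a - b) = 0 := by rw [map_sub, hab, sub_self]
      exact sub_eq_zero.mp (hker _ h1)
    set xseq : ℤ → (Fin n → ℂ) := fun k => wcoeff X (δ₀ + k • α) with hxseq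
    have hxfin : (Function.support xseq).Finite := by
      have hsub : Function.support xseq ⊆ (fun k : ℤ => δ₀ + k • α) ⁻¹' {δ | wcoeff X δ ≠ 0} :=
        fun k hk => hk
      exact (Set.Finite.preimage (hinj2.injOn) (wcoeff_support_finite X)).subset hsub
    have hmainseq : ∀ c : ℂ, ∃ p : ℤ → (Fin n → ℂ), (Function.support p).Finite ∧
        ∀ k : ℤ, p k = c • xseq k - c • Bmap k (p (k-1)) := by
      intro c
      obtain ⟨D, hD⟩ := hΔ (wd μ 0 + c • wd μ α)
      refine ⟨fun k => wcoeff (D (wd μ 0)) (δ₀ + k • α), ?_, ?_⟩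
      · have hsub : Function.support (fun k : ℤ => wcoeff (D (wd μ 0)) (δ₀ + k • α)) ⊆
            (fun k : ℤ => δ₀ + k • α) ⁻¹' {δ | wcoeff (D (wd μ 0)) δ ≠ 0} := fun k hk => hk
        exact (Set.Finite.preimage (hinj2.injOn)
          (wcoeff_support_finite (D (wd μ 0)))).subset hsub
      · intro k
        have hsum : c • X = D (wd μ 0) + c • D (wd μ α) := by
          have h1 : Δ (wd μ 0 + c • wd μ α) = c • X := by
            rw [map_add, map_smul, h0, zero_add]
          rw [← h1, hD, map_add, map_smul]
        have hidx : δ₀ + k • α - α = δ₀ + (k-1) • α := by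
          rw [sub_smul, one_smul]; abel
        funext i
        have h2 : c * wcoeff X (δ₀ + k • α) i
            = wcoeff (D (wd μ 0)) (δ₀ + k • α) i + c * wcoeff (D (wd μ α)) (δ₀ + k • α) i := by
          have h3 := congrArg (fun W : WittAlg n => wcoeff W (δ₀ + k • α) i) hsum
          simpa [wcoeff_add, wcoeff_smul] using h3
        have h3 := key_eq μ α D (δ₀ + k • α) i
        rw [hidx] at h3
        set lam := dotp μ (δ₀ + (k-1) • α) with hlam
        have hlne : lam ≠ 0 := hdot (k-1)
        have hrel : dotp μ (δ₀ + k • α) = lam + dotp μ α := by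
          rw [hlam, ← dotp_add]
          congr 1
          rw [sub_smul, one_smul]; abel
        rw [hrel] at h3
        have h4 : wcoeff (D (wd μ α)) (δ₀ + k • α) i
            = wcoeff (D (wd μ 0)) (δ₀ + (k-1) • α) i
              - lam⁻¹ * (dotp (wcoeff (D (wd μ 0)) (δ₀ + (k-1) • α)) α * μ i) := by
          have h5 : lam * wcoeff (D (wd μ α)) (δ₀ + k • α) i
              = lam * wcoeff (D (wd μ 0)) (δ₀ + (k-1) • α) i
                - dotp (wcoeff (D (wd μ 0)) (δ₀ + (k-1) • α)) α * μ i := by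
            linear_combination -h3
          field_simp
          linear_combination h5
        show wcoeff (D (wd μ 0)) (δ₀ + k • α) i
          = (c • xseq k - c • Bmap k (wcoeff (D (wd μ 0)) (δ₀ + (k-1) • α))) i
        rw [show (c • xseq k - c • Bmap k (wcoeff (D (wd μ 0)) (δ₀ + (k-1) • α))) i
            = c * xseq k i - c * (Bmap k (wcoeff (D (wd μ 0)) (δ₀ + (k-1) • α))) i from rfl]
        rw [hBapp]
        rw [show (wcoeff (D (wd μ 0)) (δ₀ + (k-1) • α)
              - lam⁻¹ • (dotp (wcoeff (D (wd μ 0)) (δ₀ + (k-1) • α)) α • μ)) i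
            = wcoeff (D (wd μ 0)) (δ₀ + (k-1) • α) i
              - lam⁻¹ * (dotp (wcoeff (D (wd μ 0)) (δ₀ + (k-1) • α)) α * μ i) from rfl]
        have hx0 : xseq k i = wcoeff X (δ₀ + k • α) i := rfl
        rw [hx0]
        linear_combination (-1 : ℂ) * h2 - c * h4
    have hall := seq_lemma xseq Bmap hBinj hxfin hmainseq
    have h00 := hall 0
    rw [hxseq] at h00
    simpa using h00
  have hSfin : {k : ℤ | wcoeff X (k • α) ≠ 0}.Finite := by
    have hsub : {k : ℤ | wcoeff X (k • α) ≠ 0} ⊆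
        (fun k : ℤ => k • α) ⁻¹' {δ | wcoeff X δ ≠ 0} := fun k hk => hk
    exact (Set.Finite.preimage (hinj.injOn) (wcoeff_support_finite X)).subset hsub
  have hXY : X = ∑ k ∈ hSfin.toFinset, wd (wcoeff X (k • α)) (k • α) := by
    apply wcoeff_eq_imp_eq
    funext δ
    have hY : wcoeffL (∑ k ∈ hSfin.toFinset, wd (wcoeff X (k • α)) (k • α)) δ
        = ∑ k ∈ hSfin.toFinset, wcoeff (wd (wcoeff X (k • α)) (k • α)) δ := by
      rw [map_sum wcoeffL _ hSfin.toFinset, Finset.sum_apply]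
    by_cases hδ : ∃ k : ℤ, δ = k • α
    · obtain ⟨k₀, rfl⟩ := hδ
      have hothers : ∀ k ∈ hSfin.toFinset, k ≠ k₀ →
          wcoeff (wd (wcoeff X (k • α)) (k • α)) (k₀ • α) = 0 := by
        intro k _ hkne
        rw [wcoeff_wd, if_neg]
        intro hc
        exact hkne (hinj hc).symm
      have hnotmem : k₀ ∉ hSfin.toFinset →
          wcoeff (wd (wcoeff X (k₀ • α)) (k₀ • α)) (k₀ • α) = 0 := by
        intro hk₀
        have hz : wcoeff X (k₀ • α) = 0 := by
          by_contra hne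
          exact hk₀ (hSfin.mem_toFinset.mpr hne)
        rw [wcoeff_wd, if_pos rfl, hz]
      rw [hY, Finset.sum_eq_single k₀ hothers hnotmem, wcoeff_wd, if_pos rfl]
    · have hzero : ∀ k ∈ hSfin.toFinset,
          wcoeff (wd (wcoeff X (k • α)) (k • α)) δ = 0 := by
        intro k _
        rw [wcoeff_wd, if_neg (fun hc => hδ ⟨k, hc⟩)]
      rw [hY, Finset.sum_eq_zero hzero]
      exact hline δ hδ
  rw [hXY]
  apply Submodule.sum_mem
  intro k _
  rw [wd_decomp]
  apply Submodule.sum_mem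
  intro i _
  exact Submodule.smul_mem _ _ (Submodule.subset_span ⟨k, i, rfl⟩)
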